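/- Let V be a self-orthogonal d-dimensional F_q-subspace of F_q^{2n}, let c : V → ℂ with c(0) = 1 be such that W(v) := c(v)·W̃(v) satisfies W(v) W(v') = W(v+v') for all v, v' ∈ V, and let (P_{[w]})_{[w] ∈ F_q^{2n}/V^{⊥J}} be the family of mutually orthogonal projections summing to the identity with W(v) = ∑_{[w]} ω^{⟨v,Jw⟩} P_{[w]} for all v ∈ V. Then for all w, w' ∈ F_q^{2n}, the image of the column space of P_{[w']} under left multiplication by W̃(w) equals the column space of P_{[w+w']}. -/

import Mathlib

/-- `ω = exp(2πi/p)`, a primitive `p`-th root of unity. -/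
noncomputable def omg (p : ℕ) : ℂ := Complex.exp (2 * (Real.pi : ℂ) * Complex.I / (p : ℂ))

/-- The `F_p`-valued pairing `⟨x, y⟩ = tr(∑ s, x s * y s)` on `F_q^n`, where
`tr : F_q → F_p` is the field trace. -/
noncomputable def ip (p : ℕ) {K : Type*} [Field K] [Fintype K] [Algebra (ZMod p) K]
    {n : ℕ} (x y : Fin n → K) : ZMod p :=
  Algebra.trace (ZMod p) K (∑ s, x s * y s)

/-- The Weyl operator `W̃(a,b)`: the `q^n × q^n` complex matrix, with rows and columns
indexed by `F_q^n`, whose `(j,k)` entry is `ω^{⟨b,k⟩}` if `j = k + a` and `0`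
otherwise. -/
noncomputable def Wt (p : ℕ) {K : Type*} [Field K] [Fintype K] [DecidableEq K]
    [Algebra (ZMod p) K] {n : ℕ} (a b : Fin n → K) :
    Matrix (Fin n → K) (Fin n → K) ℂ :=
  Matrix.of fun j k => if j = k + a then omg p ^ (ip p b k).val else 0

/-- The Weyl operator `W̃(v)` of a vector `v = (a,b) ∈ F_q^{2n} = F_q^n × F_q^n`. -/
noncomputable def Wtv (p : ℕ) {K : Type*} [Field K] [Fintype K] [DecidableEq K]
    [Algebra (ZMod p) K] {n : ℕ} (v : (Fin n → K) × (Fin n → K)) :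
    Matrix (Fin n → K) (Fin n → K) ℂ :=
  Wt p v.1 v.2

/-- The symplectic pairing `⟨v, Jw⟩ = ⟨v.2, w.1⟩ − ⟨v.1, w.2⟩ ∈ F_p` on
`F_q^{2n} = F_q^n × F_q^n`, where `J = [[0, −I_n],[I_n, 0]]`. -/
noncomputable def symp (p : ℕ) {K : Type*} [Field K] [Fintype K] [Algebra (ZMod p) K]
    {n : ℕ} (v w : (Fin n → K) × (Fin n → K)) : ZMod p :=
  ip p v.2 w.1 - ip p v.1 w.2

lemma ip_add_right (p : ℕ) {K : Type*} [Field K] [Fintype K] [Algebra (ZMod p) K]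
    {n : ℕ} (x y y' : Fin n → K) : ip p x (y + y') = ip p x y + ip p x y' := by
  unfold ip
  rw [← map_add]
  congr 1
  simp [mul_add, Finset.sum_add_distrib]

lemma ip_neg_right (p : ℕ) {K : Type*} [Field K] [Fintype K] [Algebra (ZMod p) K]
    {n : ℕ} (x y : Fin n → K) : ip p x (-y) = - ip p x y := by
  unfold ip
  rw [← map_neg]
  congr 1
  simp [mul_neg]

lemma ip_zero_right (p : ℕ) {K : Type*} [Field K] [Fintype K] [Algebra (ZMod p) K]
    {n : ℕ} (x : Fin n → K) : ip p x 0 = 0 := by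
  simp [ip]


lemma omg_prim (p : ℕ) [Fact p.Prime] : IsPrimitiveRoot (omg p) p := by
  simpa [omg] using Complex.isPrimitiveRoot_exp p (Nat.Prime.ne_zero Fact.out)

lemma omg_pow_mod (p : ℕ) [Fact p.Prime] (x : ℕ) : omg p ^ (x % p) = omg p ^ x := by
  conv_rhs => rw [← Nat.mod_add_div x p]
  rw [pow_add, pow_mul, (omg_prim p).pow_eq_one, one_pow, mul_one]

lemma omg_zmod_add (p : ℕ) [Fact p.Prime] (a b : ZMod p) :
    omg p ^ (a + b).val = omg p ^ a.val * omg p ^ b.val := by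
  haveI : NeZero p := ⟨(Fact.out : p.Prime).ne_zero⟩
  rw [ZMod.val_add, omg_pow_mod, pow_add]

lemma omg_pow_inj (p : ℕ) [Fact p.Prime] {a b : ZMod p}
    (h : omg p ^ a.val = omg p ^ b.val) : a = b := by
  haveI : NeZero p := ⟨(Fact.out : p.Prime).ne_zero⟩
  exact ZMod.val_injective p ((omg_prim p).pow_inj (ZMod.val_lt a) (ZMod.val_lt b) h)

lemma ip_symm (p : ℕ) {K : Type*} [Field K] [Fintype K] [Algebra (ZMod p) K]
    {n : ℕ} (x y : Fin n → K) : ip p x y = ip p y x := by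
  unfold ip; congr 1; simp [mul_comm]

lemma ip_add_left (p : ℕ) {K : Type*} [Field K] [Fintype K] [Algebra (ZMod p) K]
    {n : ℕ} (x x' y : Fin n → K) : ip p (x + x') y = ip p x y + ip p x' y := by
  rw [ip_symm, ip_add_right, ip_symm p y x, ip_symm p y x']

lemma symp_add_right (p : ℕ) {K : Type*} [Field K] [Fintype K] [Algebra (ZMod p) K]
    {n : ℕ} (v w w' : (Fin n → K) × (Fin n → K)) :
    symp p v (w + w') = symp p v w + symp p v w' := by
  simp only [symp, Prod.fst_add, Prod.snd_add, ip_add_right]; ring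

lemma symp_neg_right (p : ℕ) {K : Type*} [Field K] [Fintype K] [Algebra (ZMod p) K]
    {n : ℕ} (v w : (Fin n → K) × (Fin n → K)) :
    symp p v (-w) = - symp p v w := by
  simp only [symp, Prod.fst_neg, Prod.snd_neg, ip_neg_right]; ring

lemma Wt_mul (p : ℕ) [Fact p.Prime] {K : Type*} [Field K] [Fintype K] [DecidableEq K]
    [Algebra (ZMod p) K] {n : ℕ} (a b a' b' : Fin n → K) :
    Wt p a b * Wt p a' b' = omg p ^ (ip p b a').val • Wt p (a + a') (b + b') := by
  ext j k
  simp only [Matrix.mul_apply, Wt, Matrix.of_apply, Matrix.smul_apply, smul_eq_mul]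
  rcases eq_or_ne j (k + (a + a')) with h | h
  · rw [if_pos h, Finset.sum_eq_single (k + a')]
    · rw [if_pos (by rw [h]; abel), if_pos rfl,
        ip_add_right, ip_add_left, omg_zmod_add, omg_zmod_add]
      ring
    · intro m _ hm
      rw [if_neg hm, mul_zero]
    · intro hmem; exact absurd (Finset.mem_univ _) hmem
  · rw [if_neg h, mul_zero, Finset.sum_eq_zero]
    intro m _
    rcases eq_or_ne m (k + a') with hm | hm
    · rw [if_neg (by rw [hm]; intro hj; exact h (by rw [hj]; abel)), zero_mul]
    · rw [if_neg hm, mul_zero]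

lemma Wt_zero (p : ℕ) {K : Type*} [Field K] [Fintype K] [DecidableEq K]
    [Algebra (ZMod p) K] {n : ℕ} : Wt p (0 : Fin n → K) 0 = 1 := by
  ext j k
  have h0 : ip p (0 : Fin n → K) k = 0 := by simp [ip]
  simp [Wt, Matrix.one_apply, h0]

lemma Wtv_mul (p : ℕ) [Fact p.Prime] {K : Type*} [Field K] [Fintype K] [DecidableEq K]
    [Algebra (ZMod p) K] {n : ℕ} (v w : (Fin n → K) × (Fin n → K)) :
    Wtv p v * Wtv p w = omg p ^ (ip p v.2 w.1).val • Wtv p (v + w) := by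
  unfold Wtv
  rw [Wt_mul]; rfl

lemma Wtv_comm (p : ℕ) [Fact p.Prime] {K : Type*} [Field K] [Fintype K] [DecidableEq K]
    [Algebra (ZMod p) K] {n : ℕ} (v w : (Fin n → K) × (Fin n → K)) :
    Wtv p v * Wtv p w = omg p ^ (symp p v w).val • (Wtv p w * Wtv p v) := by
  rw [Wtv_mul, Wtv_mul, add_comm w v, smul_smul, ← omg_zmod_add]
  congr 2
  rw [symp, ip_symm p w.2 v.1]
  ring

lemma sum_mulVec' {ι m : Type*} [Fintype m] [DecidableEq m] (s : Finset ι)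
    (A : ι → Matrix m m ℂ) (u : m → ℂ) :
    (∑ x ∈ s, A x).mulVec u = ∑ x ∈ s, (A x).mulVec u := by
  classical
  induction s using Finset.induction_on with
  | empty => simp [Matrix.zero_mulVec]
  | insert _ _ hx ih =>
    rw [Finset.sum_insert hx, Finset.sum_insert hx, Matrix.add_mulVec, ih]


/-- `V^{⊥J} = {w ∈ F_q^{2n} : ⟨v, Jw⟩ = 0 for all v ∈ V}`, as an additive subgroup of
`F_q^{2n}` (so that one can form the quotient `F_q^{2n} / V^{⊥J}`). -/
def sympPerp (p : ℕ) {K : Type*} [Field K] [Fintype K] [Algebra (ZMod p) K]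
    {n : ℕ} (V : Submodule K ((Fin n → K) × (Fin n → K))) :
    AddSubgroup ((Fin n → K) × (Fin n → K)) where
  carrier := {w | ∀ v ∈ V, symp p v w = 0}
  zero_mem' := by
    intro v _
    simp [symp, ip_zero_right]
  add_mem' := by
    intro w w' hw hw' v hv
    have h : symp p v (w + w') = symp p v w + symp p v w' := by
      simp only [symp, Prod.fst_add, Prod.snd_add, ip_add_right]
      ring
    rw [h, hw v hv, hw' v hv, add_zero]
  neg_mem' := by
    intro w hw v hv
    have h : symp p v (-w) = - symp p v w := by
      simp only [symp, Prod.fst_neg, Prod.snd_neg, ip_neg_right]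
      ring
    rw [h, hw v hv, neg_zero]

/-- Proposition 2, part 2, of the paper: with `V`, `c`, and the family
of projections `(P_{[w]})` as in Proposition 2, for all `w, w' ∈ F_q^{2n}` the image
of the column space of `P_{[w']}` under left multiplication by `W̃(w)` equals the
column space of `P_{[w+w']}`.  The column space of a matrix `M` is
`LinearMap.range M.mulVecLin`. -/
theorem stmt_13 (p : ℕ) [Fact p.Prime] (K : Type*) [Field K] [Fintype K] [DecidableEq K]
    [Algebra (ZMod p) K] (n d : ℕ)
    (V : Submodule K ((Fin n → K) × (Fin n → K)))
    (hd : Module.finrank K V = d)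
    (hV : ∀ v ∈ V, ∀ v' ∈ V, symp p v v' = 0)
    (c : ((Fin n → K) × (Fin n → K)) → ℂ) (hc0 : c 0 = 1)
    (hmul : ∀ v ∈ V, ∀ v' ∈ V,
      (c v • Wtv p v) * (c v' • Wtv p v') = c (v + v') • Wtv p (v + v'))
    (P : (((Fin n → K) × (Fin n → K)) ⧸ sympPerp p V) →
      Matrix (Fin n → K) (Fin n → K) ℂ)
    (hproj : ∀ x, (P x).conjTranspose = P x ∧ P x * P x = P x)
    (horth : ∀ x y, x ≠ y → P x * P y = 0)
    (hsum : (∑ᶠ x, P x) = 1)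
    (hdec : ∀ v ∈ V, c v • Wtv p v = ∑ᶠ x, omg p ^ (symp p v x.out).val • P x) :
    ∀ w w' : (Fin n → K) × (Fin n → K),
      Submodule.map (Wtv p w).mulVecLin
          (LinearMap.range (P (QuotientAddGroup.mk w')).mulVecLin) =
        LinearMap.range (P (QuotientAddGroup.mk (w + w'))).mulVecLin := by
  
  classical
  haveI : Fintype (((Fin n → K) × (Fin n → K)) ⧸ sympPerp p V) := Fintype.ofFinite _
  -- multiplication of W(v) against projections
  have hWP : ∀ v ∈ V, ∀ y : ((Fin n → K) × (Fin n → K)) ⧸ sympPerp p V,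
      (c v • Wtv p v) * P y = omg p ^ (symp p v y.out).val • P y := by
    intro v hv y
    rw [hdec v hv, finsum_eq_sum_of_fintype, Finset.sum_mul, Finset.sum_eq_single y]
    · rw [smul_mul_assoc, (hproj y).2]
    · intro x _ hxy
      rw [smul_mul_assoc, horth x y hxy, smul_zero]
    · exact fun h => absurd (Finset.mem_univ y) h
  have hPW : ∀ v ∈ V, ∀ y : ((Fin n → K) × (Fin n → K)) ⧸ sympPerp p V,
      P y * (c v • Wtv p v) = omg p ^ (symp p v y.out).val • P y := by
    intro v hv y
    rw [hdec v hv, finsum_eq_sum_of_fintype, Finset.mul_sum, Finset.sum_eq_single y]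
    · rw [mul_smul_comm, (hproj y).2]
    · intro x _ hxy
      rw [mul_smul_comm, horth y x (Ne.symm hxy), smul_zero]
    · exact fun h => absurd (Finset.mem_univ y) h
  -- coset representative computation
  have hout : ∀ z : (Fin n → K) × (Fin n → K), ∀ v ∈ V,
      symp p v (QuotientAddGroup.mk z : _ ⧸ sympPerp p V).out = symp p v z := by
    intro z v hv
    have h : (QuotientAddGroup.mk ((QuotientAddGroup.mk z : _ ⧸ sympPerp p V).out) :
        _ ⧸ sympPerp p V) = QuotientAddGroup.mk z := QuotientAddGroup.out_eq' _
    have h2 : -((QuotientAddGroup.mk z : _ ⧸ sympPerp p V).out) + z ∈ sympPerp p V :=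
      QuotientAddGroup.eq.mp h
    have h3 := h2 v hv
    have h4 : symp p v (-((QuotientAddGroup.mk z : _ ⧸ sympPerp p V).out) + z)
        = - symp p v (QuotientAddGroup.mk z : _ ⧸ sympPerp p V).out + symp p v z := by
      rw [symp_add_right, symp_neg_right]
    rw [h4] at h3
    exact (neg_add_eq_zero.mp h3)
  -- eigenspace characterization of the range of P [z]
  have hL1 : ∀ (z : (Fin n → K) × (Fin n → K)) (u : (Fin n → K) → ℂ),
      u ∈ LinearMap.range (P (QuotientAddGroup.mk z)).mulVecLin ↔
      ∀ v ∈ V, (c v • Wtv p v).mulVec u = omg p ^ (symp p v z).val • u := by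
    intro z u
    constructor
    · rintro ⟨t, rfl⟩ v hv
      rw [Matrix.mulVecLin_apply, Matrix.mulVec_mulVec, hWP v hv,
        Matrix.smul_mulVec, hout z v hv]
    · intro h
      refine ⟨u, ?_⟩
      rw [Matrix.mulVecLin_apply]
      have hzero : ∀ y : ((Fin n → K) × (Fin n → K)) ⧸ sympPerp p V,
          y ≠ QuotientAddGroup.mk z → (P y).mulVec u = 0 := by
        intro y hy
        have hne : ¬ (-(y.out) + z ∈ sympPerp p V) := by
          intro hmem
          exact hy (by
            rw [← QuotientAddGroup.out_eq' y]
            exact QuotientAddGroup.eq.mpr hmem)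
        obtain ⟨v, hv, hvne⟩ : ∃ v ∈ V, symp p v (-(y.out) + z) ≠ 0 := by
          by_contra hc
          push_neg at hc
          exact hne (fun v hv => hc v hv)
        have hsne : symp p v y.out ≠ symp p v z := by
          intro he
          apply hvne
          rw [symp_add_right, symp_neg_right, he]
          ring
        have e1 : (P y).mulVec ((c v • Wtv p v).mulVec u)
            = omg p ^ (symp p v y.out).val • (P y).mulVec u := by
          rw [Matrix.mulVec_mulVec, hPW v hv, Matrix.smul_mulVec]
        have e2 : (P y).mulVec ((c v • Wtv p v).mulVec u)
            = omg p ^ (symp p v z).val • (P y).mulVec u := by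
          rw [h v hv, Matrix.mulVec_smul]
        have e3 : (omg p ^ (symp p v y.out).val - omg p ^ (symp p v z).val)
            • (P y).mulVec u = 0 := by
          rw [sub_smul, ← e1, ← e2, sub_self]
        rcases smul_eq_zero.mp e3 with hcoef | hres
        · exact absurd (omg_pow_inj p (sub_eq_zero.mp hcoef)) hsne
        · exact hres
      have hsum' : (∑ x : ((Fin n → K) × (Fin n → K)) ⧸ sympPerp p V, P x) = 1 := by
        rw [← finsum_eq_sum_of_fintype]; exact hsum
      calc (P (QuotientAddGroup.mk z)).mulVec u
          = ∑ x : ((Fin n → K) × (Fin n → K)) ⧸ sympPerp p V, (P x).mulVec u := by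
            rw [Finset.sum_eq_single (QuotientAddGroup.mk z)]
            · intro x _ hx; exact hzero x hx
            · exact fun h => absurd (Finset.mem_univ _) h
        _ = (∑ x : ((Fin n → K) × (Fin n → K)) ⧸ sympPerp p V, P x).mulVec u :=
            (sum_mulVec' _ _ _).symm
        _ = u := by rw [hsum', Matrix.one_mulVec]
  -- commutation of W(v) with Wt(w)
  have hcomm : ∀ v w : (Fin n → K) × (Fin n → K), (c v • Wtv p v) * Wtv p w
      = omg p ^ (symp p v w).val • (Wtv p w * (c v • Wtv p v)) := by
    intro v w
    rw [smul_mul_assoc, Wtv_comm p v w, mul_smul_comm, smul_comm]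
  have h0 : Wtv p (0 : (Fin n → K) × (Fin n → K)) = 1 := Wt_zero p
  intro w w'
  apply le_antisymm
  · intro u hu
    obtain ⟨t0, ht0, rfl⟩ := Submodule.mem_map.mp hu
    refine (hL1 (w + w') _).mpr ?_
    intro v hv
    have ht0' := (hL1 w' t0).mp ht0 v hv
    rw [Matrix.mulVecLin_apply, Matrix.mulVec_mulVec, hcomm v w,
      Matrix.smul_mulVec, ← Matrix.mulVec_mulVec, ht0',
      Matrix.mulVec_smul, smul_smul, ← omg_zmod_add, ← symp_add_right]
  · intro u hu
    have hu' := (hL1 (w + w') u).mp hu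
    set t := omg p ^ (ip p w.2 w.1).val • (Wtv p (-w)).mulVec u with ht
    have hwneg : ip p w.2 ((-w).1) = - ip p w.2 w.1 := by
      rw [Prod.fst_neg]; exact ip_neg_right p w.2 w.1
    have hA : (Wtv p w).mulVec t = u := by
      rw [ht, Matrix.mulVec_smul, Matrix.mulVec_mulVec, Wtv_mul, add_neg_cancel,
        h0, hwneg, Matrix.smul_mulVec, Matrix.one_mulVec, smul_smul,
        ← omg_zmod_add, add_neg_cancel, ZMod.val_zero, pow_zero, one_smul]
    have hB : ∀ v ∈ V, (c v • Wtv p v).mulVec t = omg p ^ (symp p v w').val • t := by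
      intro v hv
      rw [ht, Matrix.mulVec_smul, Matrix.mulVec_mulVec, hcomm v (-w),
        Matrix.smul_mulVec, ← Matrix.mulVec_mulVec, hu' v hv,
        Matrix.mulVec_smul, smul_smul, smul_smul, smul_smul]
      have hz : (ip p w.2 w.1 + symp p v (-w)) + symp p v (w + w')
          = symp p v w' + ip p w.2 w.1 := by
        rw [symp_add_right, symp_neg_right]; ring
      rw [← omg_zmod_add, ← omg_zmod_add, ← omg_zmod_add, hz]
    exact Submodule.mem_map.mpr ⟨t, (hL1 w' t).mpr hB, by
      rw [Matrix.mulVecLin_apply]; exact hA⟩
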